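/- Let q be a prime power. The number of triples (λ₀, λ₁, λ₂) ∈ F_q³ such that p(x) = x³ − λ₂x² − λ₁x − λ₀ is irreducible over F_q and r(x) = x³ + λ₂x² − (λ₁ − 1)x + λ₀ is reducible over F_q is at least q(q−1)²/9 − 2(q−1)/3. -/

import Mathlib

open Polynomial Finset
set_option linter.unusedSectionVars false
section Aux
variable {F : Type*} [Field F] [Fintype F] [DecidableEq F]

variable {F : Type*} [Field F] [Fintype F] [DecidableEq F]

private noncomputable def pcub (t : F × F × F) : F[X] := X ^ 3 - C t.2.2 * X ^ 2 - C t.2.1 * X - C t.1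
private noncomputable def rcub (t : F × F × F) : F[X] := X ^ 3 + C t.2.2 * X ^ 2 - C (t.2.1 - 1) * X + C t.1

private lemma pcub_deg (t : F × F × F) : (pcub t).natDegree = 3 := by
  unfold pcub; compute_degree!

private lemma rcub_deg (t : F × F × F) : (rcub t).natDegree = 3 := by
  unfold rcub; compute_degree!

private lemma pcub_ne (t : F × F × F) : pcub t ≠ 0 := by
  intro h; have := pcub_deg t; rw [h] at this; simp at this

private lemma rcub_ne (t : F × F × F) : rcub t ≠ 0 := by
  intro h; have := rcub_deg t; rw [h] at this; simp at this

private def rset (t : F × F × F) : Finset F :=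
  Finset.univ.filter fun a => a ^ 3 = t.2.2 * a ^ 2 + t.2.1 * a + t.1

private lemma mem_rset {t : F × F × F} {a : F} : a ∈ rset t ↔ (pcub t).IsRoot a := by
  simp only [rset, mem_filter, mem_univ, true_and, pcub, IsRoot, eval_sub, eval_add, eval_mul,
    eval_pow, eval_X, eval_C]
  constructor <;> intro h <;> linear_combination h

private lemma card_rset_le (t : F × F × F) : (rset t).card ≤ 3 := by
  have hsub : rset t ⊆ (pcub t).roots.toFinset := by
    intro a ha
    rw [Multiset.mem_toFinset, mem_roots (pcub_ne t)]
    exact mem_rset.mp ha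
  calc (rset t).card ≤ (pcub t).roots.toFinset.card := card_le_card hsub
    _ ≤ Multiset.card (pcub t).roots := Multiset.toFinset_card_le _
    _ ≤ (pcub t).natDegree := (pcub t).card_roots'
    _ = 3 := pcub_deg t

private lemma irred_of_rset_empty {t : F × F × F} (h : rset t = ∅) : Irreducible (pcub t) := by
  rw [irreducible_iff_roots_eq_zero_of_degree_le_three (by rw [pcub_deg]; norm_num)
    (by rw [pcub_deg])]
  rw [Multiset.eq_zero_iff_forall_notMem]
  intro a ha
  rw [mem_roots (pcub_ne t)] at ha
  exact absurd (mem_rset.mpr ha) (by simp [h])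


variable {F : Type*} [Field F] [Fintype F] [DecidableEq F]

private def fP (k : F) (v : F × F) : F × F × F :=
  ((v.1 - 1) * k - v.2 * k ^ 2 - k ^ 3, v.1, v.2)

private lemma fP_inj (k : F) : Function.Injective (fP (F := F) k) := by
  intro v w h
  simp only [fP, Prod.ext_iff] at h
  exact Prod.ext h.2.1 h.2.2

private def plane (k : F) : Finset (F × F × F) := Finset.univ.image (fP k)

private lemma card_plane (k : F) : (plane (F := F) k).card = Fintype.card F * Fintype.card F := by
  rw [plane, card_image_of_injective _ (fP_inj k), card_univ, Fintype.card_prod]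

-- line count, a ≠ -k
private lemma line_card {k a : F} (hak : a + k ≠ 0) :
    ((plane k).filter (fun t => a ∈ rset t)).card = Fintype.card F := by
  rw [plane, Finset.filter_image, card_image_of_injective _ (fP_inj k)]
  have hset : (Finset.univ.filter (fun v : F × F => a ∈ rset (fP k v)))
      = Finset.univ.image (fun c : F =>
        (((a ^ 3 + k ^ 3 + k) - c * (a ^ 2 - k ^ 2)) / (a + k), c)) := by
    ext v
    simp only [mem_filter, mem_univ, true_and, mem_image, rset]
    simp only [fP]
    constructor
    · intro h
      refine ⟨v.2, ?_⟩
      have hv1 : v.1 = ((a ^ 3 + k ^ 3 + k) - v.2 * (a ^ 2 - k ^ 2)) / (a + k) := by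
        field_simp
        linear_combination -h
      rw [← hv1]
    · rintro ⟨c, rfl⟩
      simp only
      field_simp
      ring
  rw [hset, card_image_of_injective, card_univ]
  intro x y h
  simpa using congrArg Prod.snd h

-- line at a = -k is empty (k ≠ 0)
private lemma line_empty {k : F} (hk : k ≠ 0) :
    ((plane k).filter (fun t => -k ∈ rset t)) = ∅ := by
  ext t
  simp only [mem_filter, notMem_empty, iff_false, not_and, plane, mem_image, rset, mem_filter,
    mem_univ, true_and, fP]
  rintro ⟨v, rfl⟩ h
  exact hk (by linear_combination h)


variable {F : Type*} [Field F] [Fintype F] [DecidableEq F]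

private lemma pair_card {k a b : F} (hab : a ≠ b) (ha : a + k ≠ 0) (hb : b + k ≠ 0) :
    ((plane k).filter (fun t => a ∈ rset t ∧ b ∈ rset t)).card = 1 := by
  rw [plane, Finset.filter_image, card_image_of_injective _ (fP_inj k)]
  have hab' : a - b ≠ 0 := sub_ne_zero.mpr hab
  refine le_antisymm (Finset.card_le_one.mpr ?_) ?_
  · rintro v hv w hw
    simp only [mem_filter, mem_univ, true_and, rset, Function.comp] at hv hw
    simp only [fP] at hv hw
    obtain ⟨h1, h2⟩ := hv
    obtain ⟨h1', h2'⟩ := hw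
    have hc : (v.2 - w.2) * ((a + k) * (b + k) * (a - b)) = 0 := by
      linear_combination (b + k) * h1' - (b + k) * h1 + (a + k) * h2 - (a + k) * h2'
    have hc2 : v.2 = w.2 := by
      rcases mul_eq_zero.mp hc with h | h
      · exact sub_eq_zero.mp h
      · exact absurd h (mul_ne_zero (mul_ne_zero ha hb) hab')
    rw [hc2] at h1
    have hl : (v.1 - w.1) * (a + k) = 0 := by
      linear_combination h1' - h1
    have hl2 : v.1 = w.1 := by
      rcases mul_eq_zero.mp hl with h | h
      · exact sub_eq_zero.mp h
      · exact absurd h ha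
    exact Prod.ext hl2 hc2
  · refine Finset.Nonempty.card_pos
      ⟨((((a ^ 3 + k ^ 3 + k) * (b + k) * (a - b) -
          ((a ^ 3 + k ^ 3 + k) * (b + k) - (b ^ 3 + k ^ 3 + k) * (a + k)) * (a - k)) /
            ((a + k) * (b + k) * (a - b))),
        (((a ^ 3 + k ^ 3 + k) * (b + k) - (b ^ 3 + k ^ 3 + k) * (a + k)) /
            ((a + k) * (b + k) * (a - b)))), ?_⟩
    simp only [mem_filter, mem_univ, true_and, rset]
    simp only [fP]
    constructor
    · field_simp
      ring
    · field_simp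
      ring


private lemma card_rset_eq (t : F × F × F) :
    (rset t).card = ∑ a : F, if a ∈ rset t then 1 else 0 := by
  rw [← Finset.card_filter]
  congr 1
  ext a
  simp

private lemma sum_card_rset {k : F} (hk : k ≠ 0) :
    ∑ t ∈ plane k, (rset t).card = (Fintype.card F - 1) * Fintype.card F := by
  have h1 : ∑ t ∈ plane k, (rset t).card
      = ∑ a : F, ((plane k).filter (fun t => a ∈ rset t)).card := by
    simp_rw [card_rset_eq, Finset.card_filter]
    exact Finset.sum_comm
  rw [h1]
  have h2 : ∑ a : F, ((plane k).filter (fun t => a ∈ rset t)).card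
      = ∑ a ∈ Finset.univ.erase (-k), ((plane k).filter (fun t => a ∈ rset t)).card := by
    refine (Finset.sum_subset (Finset.subset_univ _) ?_).symm
    intro a _ ha
    simp only [Finset.mem_erase, Finset.mem_univ, and_true, not_not] at ha
    subst ha
    rw [line_empty hk, Finset.card_empty]
  rw [h2]
  rw [Finset.sum_congr rfl (fun a ha => line_card (k := k) (a := a) ?_)]
  · rw [Finset.sum_const, Finset.card_erase_of_mem (Finset.mem_univ _), Finset.card_univ,
      smul_eq_mul]
  · intro h
    exact (Finset.mem_erase.mp ha).1 (by linear_combination h)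

private lemma sum_offdiag {k : F} (hk : k ≠ 0) :
    ∑ t ∈ plane k, ((rset t).card * (rset t).card - (rset t).card)
      = (Fintype.card F - 1) * (Fintype.card F - 1) - (Fintype.card F - 1) := by
  have hod : ∀ t : F × F × F, (rset t).card * (rset t).card - (rset t).card
      = ∑ p ∈ (Finset.univ : Finset F).offDiag,
          if p.1 ∈ rset t ∧ p.2 ∈ rset t then 1 else 0 := by
    intro t
    rw [← Finset.card_filter, ← Finset.offDiag_card]
    congr 1
    ext p
    simp only [Finset.mem_offDiag, Finset.mem_filter, Finset.mem_univ, true_and, rset,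
      Finset.mem_filter]
    tauto
  calc ∑ t ∈ plane k, ((rset t).card * (rset t).card - (rset t).card)
      = ∑ p ∈ (Finset.univ : Finset F).offDiag,
          ((plane k).filter (fun t => p.1 ∈ rset t ∧ p.2 ∈ rset t)).card := by
        simp_rw [hod, Finset.card_filter]
        exact Finset.sum_comm
    _ = ∑ p ∈ ((Finset.univ : Finset F).erase (-k)).offDiag,
          ((plane k).filter (fun t => p.1 ∈ rset t ∧ p.2 ∈ rset t)).card := by
        refine (Finset.sum_subset (Finset.offDiag_mono (Finset.subset_univ _)) ?_).symm
        intro p hp hp2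
        rw [Finset.card_eq_zero]
        rw [Finset.mem_offDiag] at hp
        simp only [Finset.mem_offDiag, Finset.mem_erase, Finset.mem_univ, and_true,
          not_and, not_not] at hp2
        by_cases h1 : p.1 = -k
        · refine Finset.subset_empty.mp (fun t ht => ?_)
          rw [← line_empty hk (F := F)]
          simp only [Finset.mem_filter] at ht ⊢
          exact ⟨ht.1, h1 ▸ ht.2.1⟩
        · have h2 : p.2 = -k := by
            rcases hp with ⟨-, -, hne⟩
            by_contra h2
            exact hne (hp2 h1 h2)
          refine Finset.subset_empty.mp (fun t ht => ?_)
          rw [← line_empty hk (F := F)]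
          simp only [Finset.mem_filter] at ht ⊢
          exact ⟨ht.1, h2 ▸ ht.2.2⟩
    _ = ∑ _p ∈ ((Finset.univ : Finset F).erase (-k)).offDiag, 1 := by
        refine Finset.sum_congr rfl (fun p hp => ?_)
        rw [Finset.mem_offDiag] at hp
        obtain ⟨h1, h2, hne⟩ := hp
        rw [Finset.mem_erase] at h1 h2
        exact pair_card hne (fun h => h1.1 (by linear_combination h))
          (fun h => h2.1 (by linear_combination h))
    _ = (Fintype.card F - 1) * (Fintype.card F - 1) - (Fintype.card F - 1) := by
        rw [Finset.sum_const, smul_eq_mul, mul_one, Finset.offDiag_card,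
          Finset.card_erase_of_mem (Finset.mem_univ _), Finset.card_univ]


private lemma rcub_root {k : F} {t : F × F × F} (ht : t ∈ plane k) : (rcub t).eval k = 0 := by
  simp only [plane, Finset.mem_image, Finset.mem_univ, true_and] at ht
  obtain ⟨v, rfl⟩ := ht
  simp only [rcub, fP, eval_add, eval_sub, eval_mul, eval_pow, eval_X, eval_C]
  ring

private lemma not_irred_rcub {k : F} {t : F × F × F} (ht : t ∈ plane k) :
    ¬ Irreducible (rcub t) := by
  rw [irreducible_iff_roots_eq_zero_of_degree_le_three (by rw [rcub_deg]; norm_num)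
    (by rw [rcub_deg])]
  intro h
  have : k ∈ (rcub t).roots := by
    rw [mem_roots (rcub_ne t)]
    exact rcub_root ht
  rw [h] at this
  simp at this

private lemma plane_empty_count {k : F} (hk : k ≠ 0) (hq2 : 2 ≤ Fintype.card F) :
    Fintype.card F * Fintype.card F + 2 ≤
      3 * ((plane k).filter (fun t => rset t = ∅)).card := by
  obtain ⟨m, hm⟩ := Nat.exists_eq_add_of_le hq2
  have hpt : ∀ t ∈ plane k,
      3 + ((rset t).card * (rset t).card - (rset t).card) ≤
        (if rset t = ∅ then 3 else 0) + 3 * (rset t).card := by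
    intro t _
    have h3 := card_rset_le t
    by_cases he : rset t = ∅
    · simp [he]
    · have h1 : 1 ≤ (rset t).card := Finset.card_pos.mpr (Finset.nonempty_iff_ne_empty.mpr he)
      rw [if_neg he]
      interval_cases h : (rset t).card <;> omega
  have hsum := Finset.sum_le_sum hpt
  rw [Finset.sum_add_distrib, Finset.sum_add_distrib, Finset.sum_const, ← Finset.mul_sum,
    sum_offdiag hk, sum_card_rset hk, card_plane] at hsum
  have hite : ∑ t ∈ plane k, (if rset t = ∅ then 3 else 0)
      = 3 * ((plane k).filter (fun t => rset t = ∅)).card := by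
    rw [Finset.card_filter, Finset.mul_sum]
    refine Finset.sum_congr rfl (fun t _ => ?_)
    split <;> ring
  rw [hite] at hsum
  rw [hm] at hsum ⊢
  simp only [smul_eq_mul, Nat.add_sub_cancel_left] at hsum ⊢
  have e1 : (2 + m) - 1 = m + 1 := by omega
  rw [e1] at hsum
  have e2 : (m + 1) * (m + 1) - (m + 1) = (m + 1) * m := by
    rw [Nat.mul_succ, Nat.add_sub_cancel]
  rw [e2] at hsum
  nlinarith [hsum]

end Aux

/-- The number of triples `(λ₀, λ₁, λ₂) ∈ F_q³` with
`p(x) = x³ − λ₂x² − λ₁x − λ₀` irreducible and `r(x) = x³ + λ₂x² − (λ₁−1)x + λ₀`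
reducible over `F_q` is at least `q(q−1)²/9 − 2(q−1)/3`. -/
theorem stmt_16 {F : Type*} [Field F] [Fintype F]
    (q : ℕ) (hq : IsPrimePow q) (hcard : Fintype.card F = q) :
    (q * ((q : ℚ) - 1) ^ 2) / 9 - 2 * ((q : ℚ) - 1) / 3 ≤
      ({t : F × F × F |
        Irreducible (X ^ 3 - C t.2.2 * X ^ 2 - C t.2.1 * X - C t.1) ∧
        ¬ Irreducible (X ^ 3 + C t.2.2 * X ^ 2 - C (t.2.1 - 1) * X + C t.1)} :
          Set (F × F × F)).ncard := by
  classical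
  have hq2 : 2 ≤ q := hq.two_le
  set Gf : Finset (F × F × F) :=
    Finset.univ.filter (fun t => Irreducible (pcub t) ∧ ¬ Irreducible (rcub t)) with hGf
  have hset : ({t : F × F × F |
        Irreducible (X ^ 3 - C t.2.2 * X ^ 2 - C t.2.1 * X - C t.1) ∧
        ¬ Irreducible (X ^ 3 + C t.2.2 * X ^ 2 - C (t.2.1 - 1) * X + C t.1)} :
          Set (F × F × F)) = ↑Gf := by
    ext t
    simp only [Set.mem_setOf_eq, hGf, Finset.coe_filter, Finset.mem_univ, true_and]
    simp only [pcub, rcub]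
  rw [hset, Set.ncard_coe_finset]
  -- key counting bound
  have hA : ∀ k : F, k ≠ 0 → (plane k).filter (fun t => rset t = ∅) ⊆ Gf := by
    intro k hk t ht
    rw [Finset.mem_filter] at ht
    rw [hGf, Finset.mem_filter]
    exact ⟨Finset.mem_univ t, irred_of_rset_empty ht.2, not_irred_rcub ht.1⟩
  have hsum3 : ∑ k ∈ Finset.univ.erase (0 : F),
      ((plane k).filter (fun t => rset t = ∅)).card ≤ 3 * Gf.card := by
    have h1 : ∀ k ∈ Finset.univ.erase (0 : F),
        ((plane k).filter (fun t => rset t = ∅)).card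
          = ∑ t ∈ Gf, if t ∈ (plane k).filter (fun t => rset t = ∅) then 1 else 0 := by
      intro k hk
      rw [← Finset.card_filter]
      congr 1
      ext t
      simp only [Finset.mem_filter]
      constructor
      · intro h
        have := hA k (Finset.mem_erase.mp hk).1 (Finset.mem_filter.mpr h)
        exact ⟨this, h⟩
      · tauto
    rw [Finset.sum_congr rfl h1, Finset.sum_comm]
    have h2 : ∀ t ∈ Gf, (∑ k ∈ Finset.univ.erase (0 : F),
        if t ∈ (plane k).filter (fun t => rset t = ∅) then 1 else 0) ≤ 3 := by
      intro t _
      rw [← Finset.card_filter]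
      have hsub : ((Finset.univ.erase (0:F)).filter
          (fun k => t ∈ (plane k).filter (fun t => rset t = ∅))) ⊆ (rcub t).roots.toFinset := by
        intro k hk
        rw [Finset.mem_filter, Finset.mem_filter] at hk
        rw [Multiset.mem_toFinset, mem_roots (rcub_ne t)]
        exact rcub_root hk.2.1
      calc _ ≤ (rcub t).roots.toFinset.card := Finset.card_le_card hsub
        _ ≤ Multiset.card (rcub t).roots := Multiset.toFinset_card_le _
        _ ≤ (rcub t).natDegree := (rcub t).card_roots'
        _ = 3 := rcub_deg t
    calc ∑ t ∈ Gf, (∑ k ∈ Finset.univ.erase (0 : F),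
        if t ∈ (plane k).filter (fun t => rset t = ∅) then 1 else 0)
        ≤ ∑ _t ∈ Gf, 3 := Finset.sum_le_sum h2
      _ = Gf.card * 3 := by rw [Finset.sum_const, smul_eq_mul]
      _ = 3 * Gf.card := by ring
  have hlow : (q - 1) * (q * q + 2) ≤ 3 * ∑ k ∈ Finset.univ.erase (0 : F),
      ((plane k).filter (fun t => rset t = ∅)).card := by
    rw [Finset.mul_sum]
    calc (q - 1) * (q * q + 2)
        = ∑ _k ∈ Finset.univ.erase (0 : F), (q * q + 2) := by
          rw [Finset.sum_const, smul_eq_mul, Finset.card_erase_of_mem (Finset.mem_univ _),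
            Finset.card_univ, hcard]
      _ ≤ _ := by
          refine Finset.sum_le_sum (fun k hk => ?_)
          have := plane_empty_count (F := F) (Finset.mem_erase.mp hk).1 (hcard ▸ hq2)
          rwa [hcard] at this
  have hkey : (q - 1) * (q * q + 2) ≤ 9 * Gf.card := by omega
  -- cast to ℚ
  have hq1 : (1 : ℚ) ≤ (q : ℚ) := by exact_mod_cast Nat.one_le_of_lt hq2
  have hkeyQ : ((q : ℚ) - 1) * ((q : ℚ) * q + 2) ≤ 9 * (Gf.card : ℚ) := by
    have := hkey
    have hc : ((q - 1 : ℕ) : ℚ) = (q : ℚ) - 1 := by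
      rw [Nat.cast_sub (by omega)]; norm_num
    calc ((q : ℚ) - 1) * ((q : ℚ) * q + 2) = ((q - 1 : ℕ) : ℚ) * (((q * q + 2 : ℕ)) : ℚ) := by
          rw [hc]; push_cast; ring
      _ ≤ 9 * (Gf.card : ℚ) := by exact_mod_cast hkey
  nlinarith [hkeyQ, hq1, mul_nonneg (sub_nonneg.mpr hq1) (sub_nonneg.mpr hq1)]
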